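/- Let 0<q<1 and let T = CS on ℓ²(ℤ₊) (S the shift, C eₙ = (1−q^{2n})^{1/2} eₙ). Then C = ((1−q^{-2})I + q^{-2} T*T)^{1/2}, and consequently the C*-algebra generated by T contains C and S (where S = f(C)T with f the continuous function on σ(C) with f(0)=0 and f(t)=t^{-1} for t≠0), hence C*(T) = C*(S). -/

import Mathlib

section helpers
open ContinuousLinearMap Polynomial
open scoped InnerProductSpace ComplexConjugate

variable {H : Type*} [NormedAddCommGroup H] [InnerProductSpace ℂ H] [CompleteSpace H]
  (e : HilbertBasis ℕ ℂ H)

lemma my_ortho (m n : ℕ) : ⟪e m, e n⟫_ℂ = if m = n then 1 else 0 :=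
  orthonormal_iff_ite.mp e.orthonormal m n

lemma my_ext_inner {v w : H} (h : ∀ n, ⟪e n, v⟫_ℂ = ⟪e n, w⟫_ℂ) : v = w := by
  have : e.repr v = e.repr w := by
    ext n
    simpa [HilbertBasis.repr_apply_apply] using h n
  simpa using congrArg e.repr.symm this

lemma my_clm_ext {A B : H →L[ℂ] H} (h : ∀ n, A (e n) = B (e n)) : A = B := by
  refine ContinuousLinearMap.ext_on (s := Set.range e) ?_ ?_
  · exact Submodule.dense_iff_topologicalClosure_eq_top.mpr e.dense_span
  · rintro x ⟨n, rfl⟩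
    exact h n

lemma my_hs_norm {σ : ℕ → ℕ} (hσ : Function.Injective σ) {c : ℕ → ℂ} {y : H}
    (h : HasSum (fun n => c n • e (σ n)) y) : HasSum (fun n => ‖c n‖ ^ 2) (‖y‖ ^ 2) := by
  have hinner : ∀ m, ⟪e (σ m), y⟫_ℂ = c m := by
    intro m
    have h2 : HasSum (fun n => ⟪e (σ m), c n • e (σ n)⟫_ℂ) ⟪e (σ m), y⟫_ℂ :=
      h.mapL (innerSL ℂ (e (σ m)))
    have h3 : (fun n => ⟪e (σ m), c n • e (σ n)⟫_ℂ) = fun n => if n = m then c m else 0 := by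
      funext n
      rw [inner_smul_right, my_ortho]
      rcases eq_or_ne n m with rfl | hnm
      · simp
      · have hne : σ m ≠ σ n := fun hh => hnm (hσ hh).symm
        simp [hnm, hne]
    rw [h3] at h2
    exact h2.unique (hasSum_ite_eq m (c m))
  have h3 : HasSum (fun n => conj (c n) * c n) ⟪y, y⟫_ℂ := by
    have hcont : Continuous fun z : H => ⟪z, y⟫_ℂ := by
      exact Continuous.inner continuous_id continuous_const
    have h0 := h.map (AddMonoidHom.mk' (fun z : H => ⟪z, y⟫_ℂ)
      (fun a b => inner_add_left a b y)) hcont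
    have hfe : ((fun z : H => ⟪z, y⟫_ℂ) ∘ fun n => c n • e (σ n))
        = fun n => conj (c n) * c n := by
      funext n
      simp only [Function.comp_apply, inner_smul_left, hinner n]
    convert h0 using 1
    rw [← hfe]
    rfl
    rfl
  have h4 : (fun n => conj (c n) * c n) = fun n => ((‖c n‖ ^ 2 : ℝ) : ℂ) := by
    funext n
    rw [mul_comm, Complex.mul_conj']
    norm_cast
  rw [h4, inner_self_eq_norm_sq_to_K] at h3
  have := h3.mapL Complex.reCLM
  simpa [← Complex.ofReal_pow] using this

lemma my_norm_le {σ : ℕ → ℕ} (hσ : Function.Injective σ) (d : ℕ → ℝ) (M : ℝ)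
    (hM : ∀ n, |d n| ≤ M) (A : H →L[ℂ] H)
    (hA : ∀ n, A (e n) = ((d n : ℝ) : ℂ) • e (σ n)) : ‖A‖ ≤ M := by
  have hM0 : 0 ≤ M := le_trans (abs_nonneg _) (hM 0)
  refine ContinuousLinearMap.opNorm_le_bound A hM0 fun x => ?_
  have hx : HasSum (fun n => e.repr x n • e n) x := e.hasSum_repr x
  have hAx : HasSum (fun n => (e.repr x n * (d n : ℂ)) • e (σ n)) (A x) := by
    have hfun : (fun n => A (e.repr x n • e n)) = fun n => (e.repr x n * (d n : ℂ)) • e (σ n) :=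
      funext fun n => by rw [map_smul, hA, smul_smul]
    have := hx.mapL A
    rwa [hfun] at this
  have h1 := my_hs_norm e hσ hAx
  have h2 := my_hs_norm e Function.injective_id (c := fun n => e.repr x n) (by simpa using hx)
  have hle : ‖A x‖ ^ 2 ≤ M ^ 2 * ‖x‖ ^ 2 := by
    rw [← h2.tsum_eq, ← h1.tsum_eq, ← tsum_mul_left]
    refine Summable.tsum_le_tsum (fun n => ?_) h1.summable (by exact h2.summable.mul_left _)
    rw [norm_mul]
    calc (‖e.repr x n‖ * ‖(d n : ℂ)‖) ^ 2 = ‖(d n : ℂ)‖ ^ 2 * ‖e.repr x n‖ ^ 2 := by ring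
    _ ≤ M ^ 2 * ‖e.repr x n‖ ^ 2 := by
        have h5 : ‖(d n : ℂ)‖ ≤ M := by simpa [Complex.norm_real] using hM n
        have h6 : ‖(d n : ℂ)‖ ^ 2 ≤ M ^ 2 := by nlinarith [norm_nonneg ((d n : ℂ))]
        exact mul_le_mul_of_nonneg_right h6 (sq_nonneg _)
  nlinarith [norm_nonneg (A x), norm_nonneg x, mul_nonneg hM0 (norm_nonneg x)]

lemma my_poly_diag (A : H →L[ℂ] H) (r : ℕ → ℝ) (hA : ∀ n, A (e n) = ((r n : ℝ) : ℂ) • e n)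
    (p : Polynomial ℝ) (n : ℕ) :
    (Polynomial.aeval A (p.map (algebraMap ℝ ℂ))) (e n) = ((p.eval (r n) : ℝ) : ℂ) • e n := by
  induction p using Polynomial.induction_on with
  | C a => simp [Algebra.algebraMap_eq_smul_one]
  | add p q hp hq =>
      rw [Polynomial.map_add, map_add, ContinuousLinearMap.add_apply, hp, hq,
        Polynomial.eval_add]
      push_cast
      rw [add_smul]
  | monomial k a ih =>
      have h1 : (Polynomial.C a * Polynomial.X ^ (k + 1)).map (algebraMap ℝ ℂ)
          = ((Polynomial.C a * Polynomial.X ^ k).map (algebraMap ℝ ℂ)) * Polynomial.X := by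
        simp [pow_succ, mul_assoc]
      rw [h1, map_mul, Polynomial.aeval_X, ContinuousLinearMap.mul_apply, hA, map_smul, ih,
        smul_smul]
      congr 1
      simp only [Polynomial.eval_mul, Polynomial.eval_C, Polynomial.eval_pow, Polynomial.eval_X]
      push_cast
      ring

lemma my_aeval_mem {M : StarSubalgebra ℂ (H →L[ℂ] H)} {a : H →L[ℂ] H} (ha : a ∈ M)
    (p : Polynomial ℝ) : Polynomial.aeval a (p.map (algebraMap ℝ ℂ)) ∈ M := by
  induction p using Polynomial.induction_on with
  | C c => simpa using M.algebraMap_mem (c : ℂ)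
  | add p q hp hq => simpa using add_mem hp hq
  | monomial k c ih =>
      have h1 : (Polynomial.C c * Polynomial.X ^ (k + 1)).map (algebraMap ℝ ℂ)
          = ((Polynomial.C c * Polynomial.X ^ k).map (algebraMap ℝ ℂ)) * Polynomial.X := by
        simp [pow_succ, mul_assoc]
      rw [h1, map_mul, Polynomial.aeval_X]
      exact mul_mem ih ha

lemma my_mem_of_approx {M : StarSubalgebra ℂ (H →L[ℂ] H)} (hM : IsClosed (M : Set (H →L[ℂ] H)))
    {A : H →L[ℂ] H} (h : ∀ ε : ℝ, 0 < ε → ∃ B ∈ M, ‖A - B‖ ≤ ε) : A ∈ M := by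
  have hcl : A ∈ closure (M : Set (H →L[ℂ] H)) := by
    refine Metric.mem_closure_iff.mpr fun ε hε => ?_
    obtain ⟨B, hB, hBn⟩ := h (ε / 2) (by linarith)
    exact ⟨B, hB, by rw [dist_eq_norm]; linarith⟩
  rwa [hM.closure_eq] at hcl

lemma my_sqrt_mem {M : StarSubalgebra ℂ (H →L[ℂ] H)} (hM : IsClosed (M : Set (H →L[ℂ] H)))
    (A B : H →L[ℂ] H) (s : ℕ → ℝ) (hs0 : ∀ n, 0 ≤ s n) (hs1 : ∀ n, s n ≤ 1)
    (hB : ∀ n, B (e n) = ((s n : ℝ) : ℂ) • e n) (hBM : B ∈ M)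
    (hA : ∀ n, A (e n) = ((Real.sqrt (s n) : ℝ) : ℂ) • e n) : A ∈ M := by
  refine my_mem_of_approx hM fun ε hε => ?_
  obtain ⟨p, hp⟩ := exists_polynomial_near_of_continuousOn 0 1 Real.sqrt
    Real.continuous_sqrt.continuousOn ε hε
  refine ⟨Polynomial.aeval B (p.map (algebraMap ℝ ℂ)), my_aeval_mem hBM p, ?_⟩
  refine my_norm_le e Function.injective_id
    (fun n => Real.sqrt (s n) - p.eval (s n)) ε (fun n => ?_) _ (fun n => ?_)
  · rw [abs_sub_comm]
    exact le_of_lt (hp (s n) ⟨hs0 n, hs1 n⟩)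
  · rw [ContinuousLinearMap.sub_apply, hA, my_poly_diag e B s hB p n]
    push_cast
    rw [sub_smul]
    rfl

end helpers

open ContinuousLinearMap in
open scoped InnerProductSpace ComplexConjugate in
set_option synthInstance.maxHeartbeats 1000000 in
set_option maxHeartbeats 2000000 in

/-- For `T = CS` on ℓ²(ℤ₊), one has
`C = ((1−q^{-2})·I + q^{-2} T*T)^{1/2}` (square root via the continuous functional
calculus), and the unital C*-algebras generated by `T = CS` and by `S` coincide:
`C*(T) = C*(S)` (the closed star subalgebra generated by a single element). -/
theorem stmt5 {H : Type*} [NormedAddCommGroup H] [InnerProductSpace ℂ H] [CompleteSpace H]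
    (q : ℝ) (hq0 : 0 < q) (hq1 : q < 1)
    (e : HilbertBasis ℕ ℂ H)
    (S C : H →L[ℂ] H)
    (hS : ∀ n : ℕ, S (e n) = e (n + 1))
    (hC : ∀ n : ℕ, C (e n) = ((Real.sqrt (1 - q ^ (2 * n)) : ℝ) : ℂ) • e n) :
    C = CFC.sqrt (((1 - q⁻¹ ^ 2 : ℝ) : ℂ) • (1 : H →L[ℂ] H)
          + ((q⁻¹ ^ 2 : ℝ) : ℂ) • (ContinuousLinearMap.adjoint (C * S) * (C * S)))
      ∧ C ∈ StarAlgebra.elemental ℂ (C * S)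
      ∧ S ∈ StarAlgebra.elemental ℂ (C * S)
      ∧ StarAlgebra.elemental ℂ (C * S) = StarAlgebra.elemental ℂ S := by
  have hqne : q ≠ 0 := ne_of_gt hq0
  have hqpow_pos : ∀ n : ℕ, 0 < q ^ n := fun n => pow_pos hq0 n
  have hqpow_le : ∀ n : ℕ, q ^ n ≤ 1 := fun n => pow_le_one₀ hq0.le hq1.le
  have hlam0 : ∀ n : ℕ, 0 ≤ 1 - q ^ (2 * n) := fun n => by linarith [hqpow_le (2 * n)]
  have hlam1 : ∀ n : ℕ, 1 - q ^ (2 * n) ≤ 1 := fun n => by linarith [hqpow_pos (2 * n)]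
  set μ : ℕ → ℝ := fun n => Real.sqrt (1 - q ^ (2 * n)) with hμdef
  have hμsq : ∀ n : ℕ, μ n ^ 2 = 1 - q ^ (2 * n) := fun n => Real.sq_sqrt (hlam0 n)
  set T := C * S with hTdef
  have hT : ∀ n : ℕ, T (e n) = ((μ (n + 1) : ℝ) : ℂ) • e (n + 1) := fun n => by
    rw [hTdef, ContinuousLinearMap.mul_apply, hS, hC]
  -- adjoint of T on basis vectors
  have hTadj0 : ContinuousLinearMap.adjoint T (e 0) = 0 := by
    refine my_ext_inner e fun m => ?_
    rw [adjoint_inner_right, hT, inner_smul_left, my_ortho, inner_zero_right]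
    simp
  have hTadjS : ∀ n : ℕ, ContinuousLinearMap.adjoint T (e (n + 1))
      = ((μ (n + 1) : ℝ) : ℂ) • e n := by
    intro n
    refine my_ext_inner e fun m => ?_
    rw [adjoint_inner_right, hT, inner_smul_left, inner_smul_right, my_ortho, my_ortho,
      Complex.conj_ofReal]
    rcases eq_or_ne m n with rfl | hmn
    · simp
    · simp [hmn, fun hh => hmn (Nat.succ_injective hh)]
  -- T T* = C C (diagonal 1 - q^{2n})
  have hTTadj : ∀ n : ℕ, (T * ContinuousLinearMap.adjoint T) (e n)
      = ((1 - q ^ (2 * n) : ℝ) : ℂ) • e n := by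
    intro n
    rcases n with _ | n
    · rw [ContinuousLinearMap.mul_apply, hTadj0, map_zero]
      simp
    · rw [ContinuousLinearMap.mul_apply, hTadjS, map_smul, hT, smul_smul, ← Complex.ofReal_mul,
        ← sq, hμsq]
  -- T* T (diagonal 1 - q^{2(n+1)})
  have hadjTT : ∀ n : ℕ, (ContinuousLinearMap.adjoint T * T) (e n)
      = ((1 - q ^ (2 * (n + 1)) : ℝ) : ℂ) • e n := by
    intro n
    rw [ContinuousLinearMap.mul_apply, hT, map_smul, hTadjS, smul_smul, ← Complex.ofReal_mul,
      ← sq, hμsq]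
  have hCC : ∀ n : ℕ, (C * C) (e n) = ((1 - q ^ (2 * n) : ℝ) : ℂ) • e n := by
    intro n
    rw [ContinuousLinearMap.mul_apply, hC, map_smul, hC, smul_smul, ← Complex.ofReal_mul, ← sq,
      hμsq]
  -- the CFC argument equals C * C
  have hX : ((1 - q⁻¹ ^ 2 : ℝ) : ℂ) • (1 : H →L[ℂ] H)
      + ((q⁻¹ ^ 2 : ℝ) : ℂ) • (ContinuousLinearMap.adjoint (C * S) * (C * S)) = C * C := by
    refine my_clm_ext e fun n => ?_
    rw [ContinuousLinearMap.add_apply, ContinuousLinearMap.smul_apply,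
      ContinuousLinearMap.smul_apply, ContinuousLinearMap.one_apply, ← hTdef, hadjTT n, hCC n,
      smul_smul, ← add_smul]
    congr 1
    rw [← Complex.ofReal_mul, ← Complex.ofReal_add]
    congr 1
    have h2 : q ^ (2 * (n + 1)) = q ^ (2 * n) * q ^ 2 := by ring
    field_simp
    ring
  -- C is selfadjoint and positive
  have hCsa : IsSelfAdjoint C := by
    rw [ContinuousLinearMap.isSelfAdjoint_iff']
    refine my_clm_ext e fun n => ?_
    refine my_ext_inner e fun m => ?_
    simp only [adjoint_inner_right, hC, inner_smul_left, inner_smul_right, my_ortho,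
      Complex.conj_ofReal]
    rcases eq_or_ne m n with rfl | hmn
    · simp
    · simp [hmn]
  have hC0 : (0 : H →L[ℂ] H) ≤ C := by
    rw [ContinuousLinearMap.nonneg_iff_isPositive]
    refine ⟨hCsa.isSymmetric, fun x => ?_⟩
    have hx : HasSum (fun n => e.repr x n • e n) x := e.hasSum_repr x
    have hCx : HasSum (fun n => (e.repr x n * ((μ n : ℝ) : ℂ)) • e n) (C x) := by
      have hfun : (fun n => C (e.repr x n • e n)) = fun n => (e.repr x n * ((μ n : ℝ) : ℂ)) • e n :=
        funext fun n => by rw [map_smul, hC, smul_smul]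
      have := hx.mapL C
      rwa [hfun] at this
    have hcont : Continuous fun z : H => ⟪z, x⟫_ℂ := Continuous.inner continuous_id continuous_const
    have h0 := hCx.map (AddMonoidHom.mk' (fun z : H => ⟪z, x⟫_ℂ)
      (fun a b => inner_add_left a b x)) hcont
    have hfe : ((fun z : H => ⟪z, x⟫_ℂ) ∘ fun n => (e.repr x n * ((μ n : ℝ) : ℂ)) • e n)
        = fun n => ((μ n * ‖e.repr x n‖ ^ 2 : ℝ) : ℂ) := by
      funext n
      simp only [Function.comp_apply, inner_smul_left]
      have hrepr : ⟪e n, x⟫_ℂ = e.repr x n := (e.repr_apply_apply x n).symm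
      rw [hrepr, map_mul, Complex.conj_ofReal, mul_comm (conj (e.repr x n)) _, mul_assoc,
        Complex.conj_mul']
      push_cast
      ring
    have h1 : HasSum (fun n => ((μ n * ‖e.repr x n‖ ^ 2 : ℝ) : ℂ)) ⟪C x, x⟫_ℂ := by
      convert h0 using 1
      rw [← hfe]
      rfl
      rfl
    have h2 := h1.mapL Complex.reCLM
    have h3 : HasSum (fun n => μ n * ‖e.repr x n‖ ^ 2) (Complex.reCLM ⟪C x, x⟫_ℂ) := by
      have hfn : (fun n => Complex.reCLM (((μ n * ‖e.repr x n‖ ^ 2 : ℝ) : ℂ)))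
          = fun n => μ n * ‖e.repr x n‖ ^ 2 :=
        funext fun n => by rw [Complex.reCLM_apply, Complex.ofReal_re]
      rwa [hfn] at h2
    have h4 : 0 ≤ Complex.reCLM ⟪C x, x⟫_ℂ := by
      refine hasSum_le (fun n => ?_) hasSum_zero h3
      exact mul_nonneg (Real.sqrt_nonneg _) (sq_nonneg _)
    simpa [ContinuousLinearMap.reApplyInnerSelf] using h4
  have hTelem := StarAlgebra.elemental.self_mem ℂ T
  have hclosedT := StarAlgebra.elemental.isClosed (R := ℂ) T
  have hclosedS := StarAlgebra.elemental.isClosed (R := ℂ) S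
  -- C ∈ C*(T)
  have hCmemT : C ∈ StarAlgebra.elemental ℂ T := by
    refine my_sqrt_mem e hclosedT C (T * ContinuousLinearMap.adjoint T)
      (fun n => 1 - q ^ (2 * n)) hlam0 hlam1 hTTadj ?_ hC
    have : star T = ContinuousLinearMap.adjoint T := ContinuousLinearMap.star_eq_adjoint T
    exact this ▸ mul_mem hTelem (star_mem hTelem)
  -- S ∈ C*(T)
  have hSmemT : S ∈ StarAlgebra.elemental ℂ T := by
    refine my_mem_of_approx hclosedT fun ε hε => ?_
    have ha0 : (0 : ℝ) < 1 - q ^ 2 := by nlinarith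
    have hcont : ContinuousOn (fun t : ℝ => (Real.sqrt t)⁻¹) (Set.Icc (1 - q ^ 2) 1) := by
      refine ContinuousOn.inv₀ Real.continuous_sqrt.continuousOn fun t ht => ?_
      have : (0 : ℝ) < t := lt_of_lt_of_le ha0 ht.1
      positivity
    obtain ⟨p, hp⟩ := exists_polynomial_near_of_continuousOn (1 - q ^ 2) 1
      (fun t : ℝ => (Real.sqrt t)⁻¹) hcont ε hε
    set P := Polynomial.aeval (T * ContinuousLinearMap.adjoint T) (p.map (algebraMap ℝ ℂ)) with hP
    have hPmem : P * T ∈ StarAlgebra.elemental ℂ T := by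
      refine mul_mem (my_aeval_mem ?_ p) hTelem
      have : star T = ContinuousLinearMap.adjoint T := ContinuousLinearMap.star_eq_adjoint T
      exact this ▸ mul_mem hTelem (star_mem hTelem)
    refine ⟨P * T, hPmem, ?_⟩
    have hmem : ∀ n : ℕ, 1 - q ^ (2 * (n + 1)) ∈ Set.Icc (1 - q ^ 2) 1 := by
      intro n
      constructor
      · have : q ^ (2 * (n + 1)) ≤ q ^ 2 := by
          calc q ^ (2 * (n + 1)) = q ^ 2 * q ^ (2 * n) := by ring
          _ ≤ q ^ 2 * 1 := by
              have := hqpow_le (2 * n)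
              have := (hqpow_pos 2).le
              nlinarith [hqpow_pos (2 * n)]
          _ = q ^ 2 := mul_one _
        linarith
      · exact hlam1 (n + 1)
    refine my_norm_le e (fun a b h => Nat.succ_injective h)
      (fun n => 1 - μ (n + 1) * p.eval (1 - q ^ (2 * (n + 1)))) ε (fun n => ?_) _ (fun n => ?_)
    · show |1 - μ (n + 1) * Polynomial.eval (1 - q ^ (2 * (n + 1))) p| ≤ ε
      set t := 1 - q ^ (2 * (n + 1)) with ht
      have htmem := hmem n
      have htpos : (0 : ℝ) < t := lt_of_lt_of_le ha0 htmem.1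
      have hμt : μ (n + 1) = Real.sqrt t := rfl
      have hs1 : Real.sqrt t ≤ 1 := by
        rw [show (1 : ℝ) = Real.sqrt 1 by simp]
        exact Real.sqrt_le_sqrt htmem.2
      have hs0 : 0 < Real.sqrt t := Real.sqrt_pos.mpr htpos
      have key : 1 - μ (n + 1) * p.eval t = Real.sqrt t * ((Real.sqrt t)⁻¹ - p.eval t) := by
        rw [hμt, mul_sub, mul_inv_cancel₀ (ne_of_gt hs0)]
      rw [key, abs_mul, abs_of_pos hs0, abs_sub_comm]
      calc Real.sqrt t * |p.eval t - (Real.sqrt t)⁻¹| ≤ 1 * |p.eval t - (Real.sqrt t)⁻¹| := by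
            have := abs_nonneg (p.eval t - (Real.sqrt t)⁻¹)
            nlinarith
      _ ≤ ε := by rw [one_mul]; exact (hp t htmem).le
    · rw [ContinuousLinearMap.sub_apply, hS, ContinuousLinearMap.mul_apply, hT, map_smul,
        my_poly_diag e (T * ContinuousLinearMap.adjoint T) (fun n => 1 - q ^ (2 * n)) hTTadj p
          (n + 1), smul_smul]
      push_cast
      rw [sub_smul, one_smul]
  -- C ∈ C*(S)
  have hSelem := StarAlgebra.elemental.self_mem ℂ S
  have hSadj0 : ContinuousLinearMap.adjoint S (e 0) = 0 := by
    refine my_ext_inner e fun m => ?_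
    rw [adjoint_inner_right, hS, my_ortho, inner_zero_right]
    simp
  have hSadjS : ∀ n : ℕ, ContinuousLinearMap.adjoint S (e (n + 1)) = e n := by
    intro n
    refine my_ext_inner e fun m => ?_
    rw [adjoint_inner_right, hS, my_ortho, my_ortho]
    rcases eq_or_ne m n with rfl | hmn
    · simp
    · simp [hmn, fun hh => hmn (Nat.succ_injective hh)]
  have hSpow : ∀ (k n : ℕ), (S ^ k) (e n) = e (n + k) := by
    intro k
    induction k with
    | zero => intro n; simp
    | succ k ih =>
        intro n
        rw [pow_succ, ContinuousLinearMap.mul_apply, hS, ih]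
        congr 1
        omega
  have hSadjpow : ∀ (k n : ℕ), ((ContinuousLinearMap.adjoint S) ^ k) (e n)
      = if k ≤ n then e (n - k) else 0 := by
    intro k
    induction k with
    | zero => intro n; simp
    | succ k ih =>
        intro n
        rw [pow_succ, ContinuousLinearMap.mul_apply]
        rcases n with _ | m
        · rw [hSadj0, map_zero, if_neg (by omega)]
        · rw [hSadjS, ih]
          by_cases h : k ≤ m
          · rw [if_pos h, if_pos (by omega), Nat.succ_sub_succ]
          · rw [if_neg h, if_neg (by omega)]
  have hSS : ∀ (k n : ℕ), (S ^ (k + 1) * (ContinuousLinearMap.adjoint S) ^ (k + 1)) (e n)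
      = if k + 1 ≤ n then e n else 0 := by
    intro k n
    rw [ContinuousLinearMap.mul_apply, hSadjpow]
    by_cases h : k + 1 ≤ n
    · rw [if_pos h, if_pos h, hSpow, Nat.sub_add_cancel h]
    · rw [if_neg h, if_neg h, map_zero]
  have keyR : ∀ (N n : ℕ),
      (∑ k ∈ Finset.range N, if k + 1 ≤ n then (q ^ (2 * k) - q ^ (2 * (k + 1))) else 0)
        = 1 - q ^ (2 * min N n) := by
    intro N n
    induction N with
    | zero => simp
    | succ N ih =>
        rw [Finset.sum_range_succ, ih]
        by_cases h : N + 1 ≤ n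
        · rw [if_pos h, show min N n = N from min_eq_left (by omega),
            show min (N + 1) n = N + 1 from min_eq_left (by omega)]
          ring
        · rw [if_neg h, show min N n = n from min_eq_right (by omega),
            show min (N + 1) n = n from min_eq_right (by omega), add_zero]
  have hCCmemS : C * C ∈ StarAlgebra.elemental ℂ S := by
    refine my_mem_of_approx hclosedS fun ε hε => ?_
    have hq2 : q ^ 2 < 1 := by nlinarith
    obtain ⟨N, hN⟩ := exists_pow_lt_of_lt_one hε hq2
    set Q : H →L[ℂ] H := ∑ k ∈ Finset.range N,
      ((q ^ (2 * k) - q ^ (2 * (k + 1)) : ℝ) : ℂ) • (S ^ (k + 1) * (star S) ^ (k + 1)) with hQdef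
    have hQmem : Q ∈ StarAlgebra.elemental ℂ S := by
      refine sum_mem fun k _ => ?_
      exact SMulMemClass.smul_mem _ (mul_mem (pow_mem hSelem _) (pow_mem (star_mem hSelem) _))
    have hQapp : ∀ n : ℕ, Q (e n) = ((1 - q ^ (2 * min N n) : ℝ) : ℂ) • e n := by
      intro n
      rw [hQdef, ContinuousLinearMap.sum_apply]
      have hterm : ∀ k ∈ Finset.range N,
          (((q ^ (2 * k) - q ^ (2 * (k + 1)) : ℝ) : ℂ) • (S ^ (k + 1) * (star S) ^ (k + 1))) (e n)
            = ((if k + 1 ≤ n then (q ^ (2 * k) - q ^ (2 * (k + 1))) else 0 : ℝ) : ℂ) • e n := by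
        intro k _
        rw [ContinuousLinearMap.smul_apply, ContinuousLinearMap.star_eq_adjoint, hSS]
        by_cases h : k + 1 ≤ n
        · rw [if_pos h, if_pos h]
        · rw [if_neg h, if_neg h, smul_zero]
          simp
      rw [Finset.sum_congr rfl hterm, ← Finset.sum_smul]
      congr 1
      rw [← Complex.ofReal_sum, keyR]
    refine ⟨Q, hQmem, ?_⟩
    refine my_norm_le e Function.injective_id
      (fun n => (q ^ (2 * min N n) - q ^ (2 * n))) ε (fun n => ?_) _ (fun n => ?_)
    · show |q ^ (2 * min N n) - q ^ (2 * n)| ≤ ε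
      rcases le_or_gt n N with h | h
      · rw [show min N n = n from min_eq_right h, sub_self, abs_zero]
        exact hε.le
      · rw [show min N n = N from min_eq_left h.le]
        have h1 : q ^ (2 * n) ≤ q ^ (2 * N) :=
          pow_le_pow_of_le_one hq0.le hq1.le (by omega)
        have h2 : q ^ (2 * N) = (q ^ 2) ^ N := by ring
        rw [abs_of_nonneg (by linarith)]
        calc q ^ (2 * N) - q ^ (2 * n) ≤ q ^ (2 * N) := by
              have := (hqpow_pos (2 * n)).le
              linarith
        _ = (q ^ 2) ^ N := h2
        _ ≤ ε := hN.le
    · rw [ContinuousLinearMap.sub_apply, hCC, hQapp, ← sub_smul]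
      congr 1
      push_cast
      ring
  have hCmemS : C ∈ StarAlgebra.elemental ℂ S :=
    my_sqrt_mem e hclosedS C (C * C) (fun n => 1 - q ^ (2 * n)) hlam0 hlam1 hCC hCCmemS hC
  refine ⟨?_, hCmemT, hSmemT, ?_⟩
  · rw [← hTdef] at hX
    rw [hX, ← pow_two]
    exact (CFC.sqrt_sq C hC0).symm
  · refine le_antisymm ?_ ?_
    · exact StarAlgebra.elemental.le_of_mem hclosedS (mul_mem hCmemS hSelem)
    · exact StarAlgebra.elemental.le_of_mem hclosedT hSmemT
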